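/- Let σ, k be continuous on (0,∞) with σ > 0 and γ(x) = exp(-∫_ξ^x 2k(s)/σ²(s) ds). Suppose λ > r (constant r), and h is a positive C² solution of (1/2)σ²h'' + kh' - rh = -λh with h(ξ) = 1. If ∫_ξ^∞ γ(x) dx = ∞, then h'(x) > 0 for all x > 0. -/

import Mathlib

open Set MeasureTheory intervalIntegral

/-- If the scale density `γ` has divergent integral at `∞`, then every positive
solution of `(1/2)σ²h'' + kh' - rh = -λh` (constant rate `r`, `λ > r`) with
`h(ξ) = 1` is strictly increasing. -/
theorem increasing_of_scale_divergent
    (σ k : ℝ → ℝ) (r lam ξ : ℝ) (hξ : 0 < ξ) (hlam : r < lam)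
    (hσc : ContinuousOn σ (Ioi 0)) (hkc : ContinuousOn k (Ioi 0))
    (hσ : ∀ x ∈ Ioi (0:ℝ), 0 < σ x)
    (γ : ℝ → ℝ)
    (hγ : ∀ x, γ x = Real.exp (-∫ s in ξ..x, 2 * k s / (σ s)^2))
    (hdiv : ¬ IntegrableOn γ (Ioi ξ) volume)
    (h : ℝ → ℝ) (hh : ContDiffOn ℝ 2 h (Ioi 0))
    (hpos : ∀ x ∈ Ioi (0:ℝ), 0 < h x) (h1 : h ξ = 1)
    (hode : ∀ x ∈ Ioi (0:ℝ),
      (1/2) * (σ x)^2 * deriv (deriv h) x + k x * deriv h x - r * h x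
        = -lam * h x) :
    ∀ x ∈ Ioi (0:ℝ), 0 < deriv h x := by
  have hopen : IsOpen (Ioi (0:ℝ)) := isOpen_Ioi
  set q : ℝ → ℝ := fun s => 2 * k s / (σ s)^2 with hq
  set F : ℝ → ℝ := fun x => ∫ s in ξ..x, q s with hF
  have hγ' : ∀ x, γ x = Real.exp (-(F x)) := hγ
  have hσne : ∀ x ∈ Ioi (0:ℝ), σ x ≠ 0 := fun x hx => (hσ x hx).ne'
  have hqc : ContinuousOn q (Ioi 0) := by
    exact (continuousOn_const.mul hkc).div (hσc.pow 2)
      (fun x hx => pow_ne_zero _ (hσne x hx))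
  have hsub : ∀ x ∈ Ioi (0:ℝ), uIcc ξ x ⊆ Ioi 0 := by
    intro x hx y hy
    rw [Set.mem_uIcc] at hy
    rcases hy with ⟨h1, _⟩ | ⟨h1, _⟩
    · exact lt_of_lt_of_le hξ h1
    · exact lt_of_lt_of_le hx h1
  have hFd : ∀ x ∈ Ioi (0:ℝ), HasDerivAt F (q x) x := by
    intro x hx
    have hint : IntervalIntegrable q volume ξ x :=
      (hqc.mono (hsub x hx)).intervalIntegrable
    have hmeas : StronglyMeasurableAtFilter q (nhds x) volume := hqc.stronglyMeasurableAtFilter hopen x hx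
    exact intervalIntegral.integral_hasDerivAt_right hint hmeas
      ((hqc x hx).continuousAt (hopen.mem_nhds hx))
  -- derivatives of h
  have hh1 : DifferentiableOn ℝ h (Ioi 0) := hh.differentiableOn two_ne_zero
  have hhd : ∀ x ∈ Ioi (0:ℝ), HasDerivAt h (deriv h x) x := fun x hx =>
    (hh1.differentiableAt (hopen.mem_nhds hx)).hasDerivAt
  have hd1 : ContDiffOn ℝ 1 (deriv h) (Ioi 0) := hh.deriv_of_isOpen hopen le_rfl
  have hd2 : ∀ x ∈ Ioi (0:ℝ), HasDerivAt (deriv h) (deriv (deriv h) x) x := fun x hx =>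
    ((hd1.differentiableOn one_ne_zero).differentiableAt (hopen.mem_nhds hx)).hasDerivAt
  have hdc : ContinuousOn (deriv h) (Ioi 0) := hd1.continuousOn
  -- the function φ = h' / γ
  set φ : ℝ → ℝ := fun x => deriv h x * Real.exp (F x) with hφdef
  have hφd : ∀ x ∈ Ioi (0:ℝ),
      HasDerivAt φ (2*(r - lam)*h x/(σ x)^2 * Real.exp (F x)) x := by
    intro x hx
    have hE := (hFd x hx).exp
    have hmul := (hd2 x hx).mul hE
    have hσ2 : (σ x)^2 ≠ 0 := pow_ne_zero _ (hσne x hx)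
    have key : deriv (deriv h) x + q x * deriv h x = 2*(r-lam)*h x/(σ x)^2 := by
      have hode' := hode x hx
      rw [hq]
      field_simp
      rw [eq_div_iff hσ2, add_mul, div_mul_cancel₀ _ hσ2]
      linarith [hode']
    refine HasDerivAt.congr_deriv (f := φ) hmul ?_
    rw [← key]; ring
  have hφanti : StrictAntiOn φ (Ioi 0) := by
    apply strictAntiOn_of_deriv_neg (convex_Ioi 0)
    · exact fun x hx => (hφd x hx).differentiableAt.continuousAt.continuousWithinAt
    · intro x hx
      rw [interior_Ioi] at hx
      rw [(hφd x hx).deriv]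
      have h1 : 2*(r-lam)*h x < 0 := by nlinarith [hpos x hx]
      exact mul_neg_of_neg_of_pos
        (div_neg_of_neg_of_pos h1 (pow_pos (hσ x hx) 2)) (Real.exp_pos _)
  have hγpos : ∀ x, 0 < γ x := fun x => by rw [hγ' x]; exact Real.exp_pos _
  have hrel : ∀ x, deriv h x = φ x * γ x := by
    intro x
    rw [hγ' x, hφdef]
    rw [Real.exp_neg, mul_assoc, mul_inv_cancel₀ (Real.exp_ne_zero _), mul_one]
  have hFcont : ContinuousOn F (Ioi 0) := fun x hx =>
    (hFd x hx).continuousAt.continuousWithinAt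
  have hγcont : ContinuousOn γ (Ioi 0) :=
    (Real.continuous_exp.comp_continuousOn hFcont.neg).congr (fun x _ => hγ' x)
  -- main argument
  by_contra hcon
  push_neg at hcon
  obtain ⟨x₀, hx₀, hx₀le⟩ := hcon
  set x₁ := max x₀ ξ + 1 with hx₁def
  have hx₀x₁ : x₀ < x₁ := lt_of_le_of_lt (le_max_left _ _) (lt_add_one _)
  have hξx₁ : ξ < x₁ := lt_of_le_of_lt (le_max_right _ _) (lt_add_one _)
  have hx₁pos : x₁ ∈ Ioi (0:ℝ) := hξ.trans hξx₁
  have hφx₀ : φ x₀ ≤ 0 := by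
    have := mul_le_mul_of_nonneg_right hx₀le (Real.exp_pos (F x₀)).le
    simpa [hφdef] using this
  have hc : φ x₁ < 0 := lt_of_lt_of_le (hφanti hx₀ hx₁pos hx₀x₁) hφx₀
  have hncpos : (0:ℝ) < -(φ x₁) := by linarith
  have hx₁hpos : 0 < h x₁ := hpos x₁ hx₁pos
  have hbound : ∀ T, x₁ ≤ T → (∫ x in x₁..T, γ x) ≤ h x₁ / (-(φ x₁)) := by
    intro T hT
    rcases eq_or_lt_of_le hT with rfl | hT'
    · rw [intervalIntegral.integral_same]
      positivity
    · have hIccsub : Icc x₁ T ⊆ Ioi 0 := fun y hy => lt_of_lt_of_le hx₁pos hy.1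
      have huIcc : uIcc x₁ T ⊆ Ioi 0 := by
        rw [uIcc_of_le hT]; exact hIccsub
      have hmono : ∀ x ∈ Icc x₁ T, deriv h x ≤ φ x₁ * γ x := by
        intro x hx
        have hxpos : x ∈ Ioi (0:ℝ) := hIccsub hx
        have hφle : φ x ≤ φ x₁ := by
          rcases eq_or_lt_of_le hx.1 with rfl | hlt
          · exact le_rfl
          · exact (hφanti hx₁pos hxpos hlt).le
        rw [hrel x]
        exact mul_le_mul_of_nonneg_right hφle (hγpos x).le
      have hint1 : IntervalIntegrable (deriv h) volume x₁ T :=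
        (hdc.mono huIcc).intervalIntegrable
      have hint2 : IntervalIntegrable (fun x => φ x₁ * γ x) volume x₁ T :=
        ((continuousOn_const.mul hγcont).mono huIcc).intervalIntegrable
      have hFTC : (∫ x in x₁..T, deriv h x) = h T - h x₁ :=
        intervalIntegral.integral_eq_sub_of_hasDerivAt
          (fun x hx => hhd x (huIcc hx)) hint1
      have hle : h T - h x₁ ≤ φ x₁ * ∫ x in x₁..T, γ x := by
        rw [← hFTC]
        calc (∫ x in x₁..T, deriv h x) ≤ ∫ x in x₁..T, φ x₁ * γ x :=
              intervalIntegral.integral_mono_on hT hint1 hint2 hmono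
          _ = φ x₁ * ∫ x in x₁..T, γ x := by
              rw [intervalIntegral.integral_const_mul]
      have hTpos : 0 < h T := hpos T (lt_trans hx₁pos hT')
      rw [le_div_iff₀ hncpos]
      nlinarith [hle, hTpos]
  have hIoi : IntegrableOn γ (Ioi x₁) volume := by
    apply integrableOn_Ioi_of_intervalIntegral_norm_bounded (h x₁ / (-(φ x₁))) x₁
      (f := γ) (b := fun T : ℝ => T) (l := Filter.atTop) ?_ Filter.tendsto_id
    · filter_upwards [Filter.eventually_ge_atTop x₁] with T hT
      have : (∫ x in x₁..T, ‖γ x‖) = ∫ x in x₁..T, γ x := by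
        congr 1; funext x; exact Real.norm_of_nonneg (hγpos x).le
      rw [this]
      exact hbound T hT
    · intro T
      rcases le_or_gt x₁ T with hT | hT
      · have : Icc x₁ T ⊆ Ioi 0 := fun y hy => lt_of_lt_of_le hx₁pos hy.1
        exact ((hγcont.mono this).integrableOn_Icc).mono_set Ioc_subset_Icc_self
      · rw [Ioc_eq_empty (not_lt.mpr hT.le)]
        exact integrableOn_empty
  have hIoc : IntegrableOn γ (Ioc ξ x₁) volume := by
    have : Icc ξ x₁ ⊆ Ioi 0 := fun y hy => lt_of_lt_of_le hξ hy.1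
    exact ((hγcont.mono this).integrableOn_Icc).mono_set Ioc_subset_Icc_self
  exact hdiv (by rw [← Ioc_union_Ioi_eq_Ioi hξx₁.le]; exact hIoc.union hIoi)
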